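/- Let f : ℝ^d → ℝ be convex and L-smooth (differentiable with L-Lipschitz gradient, L > 0), bounded below with f* := inf f. Let w_0 ∈ ℝ^d and define gradient-descent iterates w_{τ+1} = w_τ − η ∇f(w_τ) with step size 0 < η ≤ 1/(2L). Let E be a positive integer and u := Σ_{τ=0}^{E−1} ∇f(w_τ). Fix w* ∈ ℝ^d and let Δ := f(w*) − f*. Suppose C > 0 satisfies C ≥ 4 E √(L Δ) and ‖u‖ > C. Then −2 η C ⟨u/‖u‖, w_0 − w*⟩ + η² C² ≤ −(3 η C/(8 L E)) ‖u‖. -/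

import Mathlib

open scoped RealInnerProductSpace

section Aux

variable {F : Type*} [NormedAddCommGroup F] [InnerProductSpace ℝ F] [CompleteSpace F]

lemma aux_hasDerivAt_line (f : F → ℝ) (hdiff : Differentiable ℝ f) (x v : F) (t : ℝ) :
    HasDerivAt (fun s : ℝ => f (x + s • v)) ⟪gradient f (x + t • v), v⟫ t := by
  have h1 : HasFDerivAt f (InnerProductSpace.toDual ℝ F (gradient f (x + t • v))) (x + t • v) :=
    ((hdiff _).hasGradientAt).hasFDerivAt
  have h2 : HasDerivAt (fun s : ℝ => x + s • v) v t := by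
    simpa using ((hasDerivAt_id t).smul_const v).const_add x
  have h3 := h1.comp_hasDerivAt t h2
  exact h3.congr_deriv (by simp [InnerProductSpace.toDual_apply_apply])

lemma aux_convex_grad_le (f : F → ℝ) (hconv : ConvexOn ℝ Set.univ f)
    (hdiff : Differentiable ℝ f) (x y : F) :
    f x + ⟪gradient f x, y - x⟫ ≤ f y := by
  set v := y - x with hv
  have hφconv : ConvexOn ℝ Set.univ (fun t : ℝ => f (x + t • v)) := by
    have h := hconv.comp_affineMap (AffineMap.lineMap x y)
    have heq : (f ∘ (AffineMap.lineMap x y : ℝ →ᵃ[ℝ] F)) = fun t : ℝ => f (x + t • v) := by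
      funext s
      simp [AffineMap.lineMap_apply, hv, add_comm]
    rw [heq] at h
    simpa using h
  have hd : HasDerivAt (fun t : ℝ => f (x + t • v)) ⟪gradient f x, v⟫ 0 := by
    have := aux_hasDerivAt_line f hdiff x v 0
    simpa using this
  have hs := hφconv.le_slope_of_hasDerivAt (Set.mem_univ (0:ℝ)) (Set.mem_univ (1:ℝ)) one_pos hd
  rw [slope_def_field] at hs
  simp at hs
  have h1 : x + v = y := by rw [hv]; abel
  rw [h1] at hs
  have e : ⟪gradient f x, v⟫ = fderiv ℝ f x v := by simp
  linarith

lemma aux_smooth_quad (f : F → ℝ) (L : ℝ) (hL : 0 < L) (hdiff : Differentiable ℝ f)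
    (hlip : ∀ x y, ‖gradient f x - gradient f y‖ ≤ L * ‖x - y‖) (x y : F) :
    f y ≤ f x + ⟪gradient f x, y - x⟫ + L / 2 * ‖y - x‖ ^ 2 := by
  set v := y - x with hv
  set ψ : ℝ → ℝ := fun t => L * t ^ 2 / 2 * ‖v‖ ^ 2 + t * ⟪gradient f x, v⟫ + f x
      - f (x + t • v) with hψ
  have hψd : ∀ t : ℝ, HasDerivAt ψ
      (L * t * ‖v‖ ^ 2 + ⟪gradient f x, v⟫ - ⟪gradient f (x + t • v), v⟫) t := by
    intro t
    have h1 := aux_hasDerivAt_line f hdiff x v t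
    have ha : HasDerivAt (fun t : ℝ => L * t ^ 2 / 2 * ‖v‖ ^ 2) (L * t * ‖v‖ ^ 2) t := by
      have h0 : (fun t : ℝ => L * t ^ 2 / 2 * ‖v‖ ^ 2) = fun t : ℝ => (L / 2 * ‖v‖ ^ 2) * t ^ 2 := by
        funext s; ring
      rw [h0]
      have := (hasDerivAt_pow 2 t).const_mul (L / 2 * ‖v‖ ^ 2)
      have h2 : ((2:ℕ):ℝ) * t ^ (2 - 1) = 2 * t := by norm_num
      exact this.congr_deriv (by rw [h2]; ring)
    have hb : HasDerivAt (fun t : ℝ => t * ⟪gradient f x, v⟫) ⟪gradient f x, v⟫ t := by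
      simpa using (hasDerivAt_id t).mul_const ⟪gradient f x, v⟫
    exact ((ha.add hb).add_const (f x)).sub h1
  have hψdiff : Differentiable ℝ ψ := fun t => (hψd t).differentiableAt
  have mono : MonotoneOn ψ (Set.Icc (0:ℝ) 1) := by
    apply monotoneOn_of_deriv_nonneg (convex_Icc 0 1) hψdiff.continuous.continuousOn
      hψdiff.differentiableOn
    intro t ht
    rw [interior_Icc] at ht
    rw [(hψd t).deriv]
    have hcs : ⟪gradient f (x + t • v) - gradient f x, v⟫ ≤ L * t * ‖v‖ ^ 2 := by
      calc ⟪gradient f (x + t • v) - gradient f x, v⟫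
          ≤ ‖gradient f (x + t • v) - gradient f x‖ * ‖v‖ := real_inner_le_norm _ _
        _ ≤ (L * ‖(x + t • v) - x‖) * ‖v‖ := by
            have := hlip (x + t • v) x
            exact mul_le_mul_of_nonneg_right this (norm_nonneg v)
        _ = L * t * ‖v‖ ^ 2 := by
            rw [add_sub_cancel_left, norm_smul, Real.norm_eq_abs, abs_of_pos ht.1]
            ring
    rw [inner_sub_left] at hcs
    linarith
  have h01 := mono (Set.mem_Icc.2 ⟨le_refl 0, zero_le_one⟩)
    (Set.mem_Icc.2 ⟨zero_le_one, le_refl 1⟩) zero_le_one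
  have hψ0 : ψ 0 = 0 := by simp [hψ]
  have hψ1 : ψ 1 = L / 2 * ‖v‖ ^ 2 + ⟪gradient f x, v⟫ + f x - f y := by
    have hxy : x + v = y := by rw [hv]; abel
    simp only [hψ, one_smul, one_pow, one_mul, mul_one, hxy]
  rw [hψ0, hψ1] at h01
  linarith

lemma aux_grad_sq_le (f : F → ℝ) (L : ℝ) (hL : 0 < L) (hdiff : Differentiable ℝ f)
    (hlip : ∀ x y, ‖gradient f x - gradient f y‖ ≤ L * ‖x - y‖)
    (fstar : ℝ) (hfstar : IsGLB (Set.range f) fstar) (x : F) :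
    ‖gradient f x‖ ^ 2 ≤ 2 * L * (f x - fstar) := by
  set g := gradient f x with hg
  have h := aux_smooth_quad f L hL hdiff hlip x (x - L⁻¹ • g)
  have hy : (x - L⁻¹ • g) - x = -(L⁻¹ • g) := by abel
  rw [hy] at h
  have hin : ⟪g, -(L⁻¹ • g)⟫ = -(L⁻¹ * ‖g‖ ^ 2) := by
    rw [inner_neg_right, real_inner_smul_right, real_inner_self_eq_norm_sq]
  have hnorm : ‖-(L⁻¹ • g)‖ ^ 2 = (L⁻¹) ^ 2 * ‖g‖ ^ 2 := by
    rw [norm_neg, norm_smul, Real.norm_eq_abs, abs_of_pos (inv_pos.2 hL), mul_pow]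
  rw [hin, hnorm] at h
  have hlb : fstar ≤ f (x - L⁻¹ • g) := hfstar.1 (Set.mem_range_self _)
  have hLne : (L : ℝ) ≠ 0 := ne_of_gt hL
  have hc : L / 2 * (L⁻¹ ^ 2 * ‖g‖ ^ 2) = L⁻¹ / 2 * ‖g‖ ^ 2 := by
    field_simp
  have h2 : fstar ≤ f x - L⁻¹ / 2 * ‖g‖ ^ 2 := by linarith [h, hlb, hc]
  have h3 : L⁻¹ / 2 * ‖g‖ ^ 2 ≤ f x - fstar := by linarith
  have h4 := mul_le_mul_of_nonneg_left h3 (by positivity : (0:ℝ) ≤ 2 * L)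
  calc ‖g‖ ^ 2 = 2 * L * (L⁻¹ / 2 * ‖g‖ ^ 2) := by field_simp
    _ ≤ 2 * L * (f x - fstar) := h4

lemma aux_sum_inner_prefix (g : ℕ → F) (n : ℕ) :
    2 * ∑ τ ∈ Finset.range n, ⟪∑ s ∈ Finset.range τ, g s, g τ⟫ =
      ‖∑ τ ∈ Finset.range n, g τ‖ ^ 2 - ∑ τ ∈ Finset.range n, ‖g τ‖ ^ 2 := by
  induction n with
  | zero => simp
  | succ n ih =>
      simp only [Finset.sum_range_succ]
      rw [norm_add_sq_real]
      linarith

end Aux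

/-- Case 1 (equation pf-july15-5-1) in the proof of Theorem B.1: bound on the
clipped-update term when the update norm exceeds the clipping threshold. -/
theorem stmt_10 {d : ℕ} (f : EuclideanSpace ℝ (Fin d) → ℝ) (L : ℝ) (hL : 0 < L)
    (hconv : ConvexOn ℝ Set.univ f)
    (hdiff : Differentiable ℝ f)
    (hlip : ∀ x y, ‖gradient f x - gradient f y‖ ≤ L * ‖x - y‖)
    (fstar : ℝ) (hfstar : IsGLB (Set.range f) fstar)
    (η : ℝ) (hη0 : 0 < η) (hη : η ≤ 1 / (2 * L))
    (w : ℕ → EuclideanSpace ℝ (Fin d))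
    (hw : ∀ τ, w (τ + 1) = w τ - η • gradient f (w τ))
    (E : ℕ) (hE : 0 < E)
    (u : EuclideanSpace ℝ (Fin d))
    (hu : u = ∑ τ ∈ Finset.range E, gradient f (w τ))
    (wstar : EuclideanSpace ℝ (Fin d))
    (Δ : ℝ) (hΔ : Δ = f wstar - fstar)
    (C : ℝ) (hC0 : 0 < C) (hC : C ≥ 4 * (E : ℝ) * Real.sqrt (L * Δ))
    (hnorm : ‖u‖ > C) :
    -2 * η * C * ⟪‖u‖⁻¹ • u, w 0 - wstar⟫ + η ^ 2 * C ^ 2 ≤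
      -(3 * η * C / (8 * L * (E : ℝ))) * ‖u‖ := by
  set g : ℕ → EuclideanSpace ℝ (Fin d) := fun τ => gradient f (w τ) with hg
  set N : ℝ := ‖u‖ with hN
  set EE : ℝ := (E : ℝ) with hEE
  set G : ℝ := ∑ τ ∈ Finset.range E, ‖g τ‖ ^ 2 with hG
  set I : ℝ := ⟪u, w 0 - wstar⟫ with hI
  have hN0 : 0 < N := lt_trans hC0 hnorm
  have hΔ0 : 0 ≤ Δ := by
    rw [hΔ]
    have := hfstar.1 (Set.mem_range_self wstar)
    linarith
  have hG0 : 0 ≤ G := Finset.sum_nonneg fun τ _ => sq_nonneg _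
  have hEE1 : (1:ℝ) ≤ EE := by
    have h1 : (1:ℕ) ≤ E := hE
    rw [hEE]
    exact_mod_cast h1
  have hEE0 : 0 < EE := lt_of_lt_of_le one_pos hEE1
  -- Cauchy–Schwarz: N² ≤ E·G
  have hGE : N ^ 2 ≤ EE * G := by
    have h1 : N ≤ ∑ τ ∈ Finset.range E, ‖g τ‖ := by
      rw [hN, hu]; exact norm_sum_le _ _
    have h2 : N ^ 2 ≤ (∑ τ ∈ Finset.range E, ‖g τ‖) ^ 2 := by
      apply pow_le_pow_left₀ (norm_nonneg u) h1
    have h3 : (∑ τ ∈ Finset.range E, ‖g τ‖) ^ 2 ≤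
        (Finset.range E).card * ∑ τ ∈ Finset.range E, ‖g τ‖ ^ 2 :=
      sq_sum_le_card_mul_sum_sq
    rw [Finset.card_range] at h3
    calc N ^ 2 ≤ _ := h2
      _ ≤ _ := h3
      _ = EE * G := by rw [hEE, hG]
  -- N² ≥ 16 L E² Δ
  have hNsq : 16 * L * EE ^ 2 * Δ ≤ N ^ 2 := by
    have hsq : Real.sqrt (L * Δ) ^ 2 = L * Δ := Real.sq_sqrt (mul_nonneg hL.le hΔ0)
    have hCpos : (0:ℝ) ≤ 4 * EE * Real.sqrt (L * Δ) :=
      mul_nonneg (mul_nonneg (by norm_num) hEE0.le) (Real.sqrt_nonneg _)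
    have h1 : (4 * EE * Real.sqrt (L * Δ)) ^ 2 ≤ C ^ 2 := pow_le_pow_left₀ hCpos hC 2
    have h2 : C ^ 2 ≤ N ^ 2 := pow_le_pow_left₀ hC0.le hnorm.le 2
    calc 16 * L * EE ^ 2 * Δ = (4 * EE * Real.sqrt (L * Δ)) ^ 2 := by
          rw [mul_pow, mul_pow, hsq]; ring
      _ ≤ C ^ 2 := h1
      _ ≤ N ^ 2 := h2
  -- iterate formula
  have hiter : ∀ τ, w 0 - w τ = η • ∑ s ∈ Finset.range τ, g s := by
    intro τ
    induction τ with
    | zero => simp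
    | succ τ ih =>
        have h1 : w 0 - w (τ + 1) = (w 0 - w τ) + η • g τ := by
          rw [hw τ]; abel
        rw [h1, ih, Finset.sum_range_succ, smul_add]
  -- decomposition of I
  set A : ℝ := ∑ τ ∈ Finset.range E, ⟪g τ, w τ - wstar⟫ with hA
  set B : ℝ := ∑ τ ∈ Finset.range E, ⟪∑ s ∈ Finset.range τ, g s, g τ⟫ with hB
  have hIAB : I = A + η * B := by
    rw [hI, hu, sum_inner, hA, hB, Finset.mul_sum, ← Finset.sum_add_distrib]
    apply Finset.sum_congr rfl
    intro τ _
    have hsplit : w 0 - wstar = (w τ - wstar) + (w 0 - w τ) := by abel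
    rw [hsplit, inner_add_right, hiter τ, real_inner_smul_right,
      real_inner_comm (g τ) (∑ s ∈ Finset.range τ, g s)]
  have hBval : 2 * B = N ^ 2 - G := by
    rw [hB, hG, hN, hu]
    exact aux_sum_inner_prefix g E
  -- lower bound on A
  have hAlb : G / (2 * L) - EE * Δ ≤ A := by
    have hterm : ∀ τ ∈ Finset.range E, ‖g τ‖ ^ 2 / (2 * L) - Δ ≤ ⟪g τ, w τ - wstar⟫ := by
      intro τ _
      have hcv := aux_convex_grad_le f hconv hdiff (w τ) wstar
      have hcv2 : ⟪g τ, wstar - w τ⟫ = -⟪g τ, w τ - wstar⟫ := by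
        rw [← inner_neg_right, neg_sub]
      rw [hcv2] at hcv
      have hpl := aux_grad_sq_le f L hL hdiff hlip fstar hfstar (w τ)
      have hdiv : ‖g τ‖ ^ 2 / (2 * L) ≤ f (w τ) - fstar := by
        rw [div_le_iff₀ (by positivity : (0:ℝ) < 2 * L)]
        linarith [hpl]
      rw [hΔ]
      linarith
    have hsum := Finset.sum_le_sum hterm
    have heq : ∑ τ ∈ Finset.range E, (‖g τ‖ ^ 2 / (2 * L) - Δ) = G / (2 * L) - EE * Δ := by
      rw [Finset.sum_sub_distrib, ← Finset.sum_div, Finset.sum_const, Finset.card_range,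
        nsmul_eq_mul, hG, hEE]
    rw [heq] at hsum
    exact hsum
  -- core inequality: 2 L I ≥ G - LηG + LηN² - 2 L E Δ
  have hI3 : G - L * η * G + L * η * N ^ 2 - 2 * L * EE * Δ ≤ 2 * L * I := by
    have h2LA : G - 2 * L * EE * Δ ≤ 2 * L * A := by
      have := mul_le_mul_of_nonneg_left hAlb (by positivity : (0:ℝ) ≤ 2 * L)
      have heq : 2 * L * (G / (2 * L) - EE * Δ) = G - 2 * L * EE * Δ := by
        field_simp
      rw [heq] at this
      linarith [this]
    have hIeq : 2 * L * I = 2 * L * A + L * η * (N ^ 2 - G) := by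
      rw [hIAB, ← hBval]; ring
    linarith [h2LA, hIeq]
  -- multiply by 8 E
  have hLη : L * η ≤ 1 / 2 := by
    have := mul_le_mul_of_nonneg_left hη hL.le
    have heq : L * (1 / (2 * L)) = 1 / 2 := by
      field_simp
    rw [heq] at this
    linarith [this]
  have hCN : C * N ≤ N ^ 2 := by
    have := mul_le_mul_of_nonneg_right (le_of_lt hnorm) (le_of_lt hN0)
    calc C * N ≤ N * N := this
      _ = N ^ 2 := (sq N).symm
  have h8 := mul_le_mul_of_nonneg_left hI3 (mul_nonneg (by norm_num : (0:ℝ) ≤ 8) hEE0.le)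
  have p1 : 0 ≤ (4 * EE * G) * (1 - 2 * (L * η)) :=
    mul_nonneg (mul_nonneg (mul_nonneg (by norm_num : (0:ℝ) ≤ 4) hEE0.le) hG0) (by linarith)
  have p2 : (8 * L * EE * η) * (C * N) ≤ (8 * L * EE * η) * N ^ 2 :=
    mul_le_mul_of_nonneg_left hCN
      (mul_nonneg (mul_nonneg (mul_nonneg (by norm_num : (0:ℝ) ≤ 8) hL.le) hEE0.le) hη0.le)
  have p3 : 4 * N ^ 2 ≤ 4 * (EE * G) := by linarith
  have main : 8 * L * EE * η * C * N + 3 * N ^ 2 ≤ 16 * L * EE * I := by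
    linarith [h8, p1, p2, p3, hNsq]
  -- conclude
  have hinner : ⟪N⁻¹ • u, w 0 - wstar⟫ = N⁻¹ * I := by
    rw [real_inner_smul_left, hI]
  rw [hinner]
  rw [← sub_nonneg]
  have hNe : N ≠ 0 := ne_of_gt hN0
  have hLE0 : (0:ℝ) < 8 * L * EE := mul_pos (mul_pos (by norm_num) hL) hEE0
  have hLEne : (8 * L * EE) ≠ 0 := ne_of_gt hLE0
  have expand : -(3 * η * C / (8 * L * EE)) * N - (-2 * η * C * (N⁻¹ * I) + η ^ 2 * C ^ 2) =
      (η * C * (16 * L * EE * I) - η * C * (8 * L * EE * η * C * N + 3 * N ^ 2)) /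
        (8 * L * EE * N) := by
    field_simp
    ring
  rw [expand]
  apply div_nonneg
  · have := mul_le_mul_of_nonneg_left main (le_of_lt (mul_pos hη0 hC0))
    linarith
  · exact (mul_pos hLE0 hN0).le
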